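/- Let n ≥ 7 be an integer and let x, y, z be real numbers of the form 2πk/n for integers k, such that x + y + z is an integer multiple of 2π but at least one of x, y, z is not an integer multiple of 2π. Then |cos(x) + cos(y) + cos(z)| ≤ 3 - 2π²/n². -/

import Mathlib

open Real

private lemma aux_cos_two_pi_div_le (n : ℕ) (hn : 7 ≤ n) :
    Real.cos (2 * Real.pi / n) ≤ 1 - Real.pi ^ 2 / n ^ 2 := by
  have hn0 : (0:ℝ) < n := by exact_mod_cast (show 0 < n by omega)
  have h7 : (7:ℝ) ≤ n := by exact_mod_cast hn
  have hπ : Real.pi < 3.15 := Real.pi_lt_d2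
  have hπ0 : 0 < Real.pi := Real.pi_pos
  set s : ℝ := Real.pi / n with hs_def
  have hs0 : 0 < s := by positivity
  have hs45 : s ≤ 0.45 := by
    rw [hs_def, div_le_iff₀ hn0]; nlinarith
  have hs1 : s ≤ 1 := by linarith
  have hsin : s - s ^ 3 / 4 < Real.sin s := by
    have := Real.sin_gt_sub_cube hs0; nlinarith [pow_pos hs0 3]
  have hcos : Real.cos (2 * s) = 1 - 2 * Real.sin s ^ 2 := by
    have h1 := Real.sin_sq_add_cos_sq s
    rw [Real.cos_two_mul]; nlinarith
  have heq : 2 * Real.pi / n = 2 * s := by rw [hs_def]; ring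
  have heq2 : Real.pi ^ 2 / n ^ 2 = s ^ 2 := by rw [hs_def, div_pow]
  rw [heq, heq2, hcos]
  have hpos : 0 < s - s ^ 3 / 4 := by nlinarith
  have h2 : (s - s ^ 3 / 4) ^ 2 ≤ Real.sin s ^ 2 := by nlinarith
  have h3 : 0 ≤ s ^ 2 * (1 - s ^ 2) := mul_nonneg (sq_nonneg s) (by nlinarith)
  nlinarith [h2, h3, pow_nonneg hs0.le 6]

private lemma aux_cos_le_int (n : ℕ) (hn : 7 ≤ n) (r : ℤ) (h0 : 1 ≤ r) (h1 : r < (n:ℤ)) :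
    Real.cos (2 * Real.pi * r / n) ≤ 1 - Real.pi ^ 2 / n ^ 2 := by
  have hn0 : (0:ℝ) < n := by exact_mod_cast (show 0 < n by omega)
  have hπ0 : 0 < Real.pi := Real.pi_pos
  have hr1 : (1:ℝ) ≤ (r:ℝ) := by exact_mod_cast h0
  have hr2 : (r:ℝ) ≤ (n:ℝ) - 1 := by
    have : (r:ℝ) + 1 ≤ (n:ℝ) := by exact_mod_cast h1
    linarith
  have key := aux_cos_two_pi_div_le n hn
  have hθ1 : 2 * Real.pi / n ≤ 2 * Real.pi * r / n := by
    rw [div_le_div_iff₀ hn0 hn0]; nlinarith [mul_pos hπ0 hn0]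
  have hcancel : (2 * Real.pi / n) * n = 2 * Real.pi := by field_simp
  have hθ2 : 2 * Real.pi * r / n ≤ 2 * Real.pi - 2 * Real.pi / n := by
    rw [div_le_iff₀ hn0]; nlinarith [hcancel]
  have h2pin : 0 ≤ 2 * Real.pi / n := by positivity
  rcases le_or_gt (2 * Real.pi * r / n) Real.pi with hθ | hθ
  · exact le_trans (Real.cos_le_cos_of_nonneg_of_le_pi h2pin hθ hθ1) key
  · rw [← Real.cos_two_pi_sub]
    refine le_trans (Real.cos_le_cos_of_nonneg_of_le_pi h2pin (by linarith) (by linarith)) key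

private lemma aux_cos_ge_int (n : ℕ) (hn : 7 ≤ n) (r : ℤ) (h0 : 0 ≤ r) (h1 : r < (n:ℤ))
    (h : 3 * r ≤ (n:ℤ) ∨ 2 * (n:ℤ) ≤ 3 * r) :
    -(1/2) ≤ Real.cos (2 * Real.pi * r / n) := by
  have hn0 : (0:ℝ) < n := by exact_mod_cast (show 0 < n by omega)
  have hπ0 : 0 < Real.pi := Real.pi_pos
  have hr0 : (0:ℝ) ≤ (r:ℝ) := by exact_mod_cast h0
  have hr1 : (r:ℝ) ≤ (n:ℝ) := by exact_mod_cast h1.le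
  have hc : Real.cos (2 * Real.pi / 3) = -(1/2) := by
    have h23 : 2 * Real.pi / 3 = Real.pi - Real.pi / 3 := by ring
    rw [h23, Real.cos_pi_sub, Real.cos_pi_div_three]
  have h23pi : 2 * Real.pi / 3 ≤ Real.pi := by linarith
  rcases h with h | h
  · have hr3 : (3:ℝ) * r ≤ (n:ℝ) := by exact_mod_cast h
    have hθ : 2 * Real.pi * r / n ≤ 2 * Real.pi / 3 := by
      rw [div_le_div_iff₀ hn0 (by norm_num)]; nlinarith
    have hθ0 : 0 ≤ 2 * Real.pi * r / n := by positivity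
    rw [← hc]
    exact Real.cos_le_cos_of_nonneg_of_le_pi hθ0 h23pi hθ
  · have hr3 : 2 * (n:ℝ) ≤ (3:ℝ) * r := by exact_mod_cast h
    rw [← Real.cos_two_pi_sub, ← hc]
    refine Real.cos_le_cos_of_nonneg_of_le_pi ?_ h23pi ?_
    · have : 2 * Real.pi * r / n ≤ 2 * Real.pi := by
        rw [div_le_iff₀ hn0]; nlinarith
      linarith
    · rw [sub_le_iff_le_add]
      rw [div_add_div _ _ (by norm_num : (3:ℝ) ≠ 0) (ne_of_gt hn0), le_div_iff₀ (by positivity)]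
      nlinarith

private lemma aux_cos_mod (n : ℕ) (hn : 0 < n) (k : ℤ) :
    Real.cos (2 * Real.pi * k / n)
      = Real.cos (2 * Real.pi * ((k % (n:ℤ) : ℤ) : ℝ) / n) := by
  have hne : (n:ℝ) ≠ 0 := by exact_mod_cast hn.ne'
  have h : ((n:ℤ) * (k / (n:ℤ)) + k % (n:ℤ) : ℤ) = k := Int.mul_ediv_add_emod k n
  have hR : (n:ℝ) * ((k / (n:ℤ) : ℤ) : ℝ) + ((k % (n:ℤ) : ℤ) : ℝ) = (k:ℝ) := by
    exact_mod_cast congrArg (Int.cast : ℤ → ℝ) h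
  have h2 : (k:ℝ) = (n:ℝ) * ((k / (n:ℤ) : ℤ) : ℝ) + ((k % (n:ℤ) : ℤ) : ℝ) := hR.symm
  have heq : 2 * Real.pi * k / n
      = 2 * Real.pi * ((k % (n:ℤ) : ℤ) : ℝ) / n + ((k / (n:ℤ) : ℤ) : ℝ) * (2 * Real.pi) := by
    rw [h2]
    field_simp
    ring
  rw [heq, Real.cos_add_int_mul_two_pi]

theorem cos_sum_bound (n : ℕ) (hn : 7 ≤ n) (kx ky kz : ℤ) (x y z : ℝ)
    (hx : x = 2 * Real.pi * kx / n) (hy : y = 2 * Real.pi * ky / n)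
    (hz : z = 2 * Real.pi * kz / n)
    (hsum : (n : ℤ) ∣ (kx + ky + kz))
    (hnot : ¬ ((n : ℤ) ∣ kx ∧ (n : ℤ) ∣ ky ∧ (n : ℤ) ∣ kz)) :
    |Real.cos x + Real.cos y + Real.cos z| ≤ 3 - 2 * Real.pi ^ 2 / n ^ 2 := by
  have hnpos : 0 < n := by omega
  have hnZ : (0:ℤ) < (n:ℤ) := by exact_mod_cast hnpos
  have hnR : (0:ℝ) < n := by exact_mod_cast hnpos
  set rx : ℤ := kx % (n:ℤ) with hrx_def
  set ry : ℤ := ky % (n:ℤ) with hry_def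
  set rz : ℤ := kz % (n:ℤ) with hrz_def
  have hrx0 : 0 ≤ rx := Int.emod_nonneg _ hnZ.ne'
  have hry0 : 0 ≤ ry := Int.emod_nonneg _ hnZ.ne'
  have hrz0 : 0 ≤ rz := Int.emod_nonneg _ hnZ.ne'
  have hrx1 : rx < (n:ℤ) := Int.emod_lt_of_pos _ hnZ
  have hry1 : ry < (n:ℤ) := Int.emod_lt_of_pos _ hnZ
  have hrz1 : rz < (n:ℤ) := Int.emod_lt_of_pos _ hnZ
  -- sum of residues is a multiple of n
  obtain ⟨m, hm⟩ := hsum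
  have hdx := Int.mul_ediv_add_emod kx (n:ℤ)
  have hdy := Int.mul_ediv_add_emod ky (n:ℤ)
  have hdz := Int.mul_ediv_add_emod kz (n:ℤ)
  set m' : ℤ := m - kx / (n:ℤ) - ky / (n:ℤ) - kz / (n:ℤ) with hm'_def
  have hsum' : rx + ry + rz = (n:ℤ) * m' := by
    rw [hm'_def]; rw [hrx_def, hry_def, hrz_def]; linarith [hm, hdx, hdy, hdz]
  have hm'0 : 0 ≤ m' := by
    by_contra hc; push_neg at hc
    nlinarith
  have hm'2 : m' ≤ 2 := by
    by_contra hc; push_neg at hc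
    nlinarith
  -- not all residues zero
  have hnot' : ¬ (rx = 0 ∧ ry = 0 ∧ rz = 0) := by
    intro ⟨h1, h2, h3⟩
    exact hnot ⟨Int.dvd_of_emod_eq_zero h1, Int.dvd_of_emod_eq_zero h2,
      Int.dvd_of_emod_eq_zero h3⟩
  -- rewrite cosines
  have hcx : Real.cos x = Real.cos (2 * Real.pi * rx / n) := by
    rw [hx, aux_cos_mod n hnpos kx]
  have hcy : Real.cos y = Real.cos (2 * Real.pi * ry / n) := by
    rw [hy, aux_cos_mod n hnpos ky]
  have hcz : Real.cos z = Real.cos (2 * Real.pi * rz / n) := by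
    rw [hz, aux_cos_mod n hnpos kz]
  have hπ : Real.pi < 3.15 := Real.pi_lt_d2
  have hπ0 : 0 < Real.pi := Real.pi_pos
  have h7 : (7:ℝ) ≤ n := by exact_mod_cast hn
  rw [abs_le]
  constructor
  · -- lower bound: some residue gives cos ≥ -1/2
    have hD : (3 * rx ≤ (n:ℤ) ∨ 2 * (n:ℤ) ≤ 3 * rx) ∨ (3 * ry ≤ (n:ℤ) ∨ 2 * (n:ℤ) ≤ 3 * ry)
        ∨ (3 * rz ≤ (n:ℤ) ∨ 2 * (n:ℤ) ≤ 3 * rz) := by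
      interval_cases m' <;> omega
    have hhalf : 2 * Real.pi ^ 2 / n ^ 2 ≤ 1/2 := by
      rw [div_le_iff₀ (by positivity)]
      nlinarith
    have hb1 := Real.neg_one_le_cos (2 * Real.pi * rx / n)
    have hb2 := Real.neg_one_le_cos (2 * Real.pi * ry / n)
    have hb3 := Real.neg_one_le_cos (2 * Real.pi * rz / n)
    rcases hD with h | h | h
    · have := aux_cos_ge_int n hn rx hrx0 hrx1 h
      rw [hcx, hcy, hcz]; linarith
    · have := aux_cos_ge_int n hn ry hry0 hry1 h
      rw [hcx, hcy, hcz]; linarith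
    · have := aux_cos_ge_int n hn rz hrz0 hrz1 h
      rw [hcx, hcy, hcz]; linarith
  · -- upper bound: at least two residues are nonzero
    have htwo : (1 ≤ rx ∧ 1 ≤ ry) ∨ (1 ≤ rx ∧ 1 ≤ rz) ∨ (1 ≤ ry ∧ 1 ≤ rz) := by
      interval_cases m' <;> omega
    have hb1 := Real.cos_le_one (2 * Real.pi * rx / n)
    have hb2 := Real.cos_le_one (2 * Real.pi * ry / n)
    have hb3 := Real.cos_le_one (2 * Real.pi * rz / n)
    rcases htwo with ⟨ha, hb⟩ | ⟨ha, hb⟩ | ⟨ha, hb⟩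
    · have h1 := aux_cos_le_int n hn rx ha hrx1
      have h2 := aux_cos_le_int n hn ry hb hry1
      rw [hcx, hcy, hcz, show 2 * Real.pi ^ 2 / (n:ℝ) ^ 2 = 2 * (Real.pi ^ 2 / (n:ℝ) ^ 2) from by ring]; linarith
    · have h1 := aux_cos_le_int n hn rx ha hrx1
      have h2 := aux_cos_le_int n hn rz hb hrz1
      rw [hcx, hcy, hcz, show 2 * Real.pi ^ 2 / (n:ℝ) ^ 2 = 2 * (Real.pi ^ 2 / (n:ℝ) ^ 2) from by ring]; linarith
    · have h1 := aux_cos_le_int n hn ry ha hry1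
      have h2 := aux_cos_le_int n hn rz hb hrz1
      rw [hcx, hcy, hcz, show 2 * Real.pi ^ 2 / (n:ℝ) ^ 2 = 2 * (Real.pi ^ 2 / (n:ℝ) ^ 2) from by ring]; linarith
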